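/- Suppose η = −1 (put case) and the European values are strictly positive: e_k(x) > 0 for every k < n and x ∈ C. Define f* : {0,…,n−1} × Ξ(C) → [0,∞] by f*(k,ξ) := sup{ α(x) : x ∈ S_k and Ξ(x) = ξ }, with the convention sup ∅ := 0. Then the map x ↦ (α(x), Ξ(x)) is a homeomorphism from C onto (0,∞) × Ξ(C), and for every k < n the stopping region satisfies S_k = { x ∈ C : α(x) ≤ f*(k, Ξ(x)) }, the inequality being taken in [0,∞]. -/

import Mathlib

open MeasureTheory ProbabilityTheory
open scoped ENNReal NNReal Topology

/-- The ambient space `ℝ^{d₁} × ℝ^{d₂} × ℝ^{d₃}` for the state `x = (s, y, z)`. -/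
abbrev StateSpace (d₁ d₂ d₃ : ℕ) : Type :=
  (Fin d₁ → ℝ) × (Fin d₂ → ℝ) × (Fin d₃ → ℝ)

/-- Global (everywhere-defined) version of the value functions, built by downward
recursion; `stmt4W φ κ n m` corresponds to the value function at time `n - m`. -/
noncomputable def stmt4W {d₁ d₂ d₃ : ℕ}
    (φ : ℕ → StateSpace d₁ d₂ d₃ → ℝ)
    (κ : ℕ → Kernel (StateSpace d₁ d₂ d₃) (StateSpace d₁ d₂ d₃))
    (n : ℕ) : ℕ → StateSpace d₁ d₂ d₃ → ℝ
  | 0 => φ n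
  | (m + 1) => fun x =>
      max (φ (n - (m + 1)) x) (∫ y, stmt4W φ κ n m y ∂((κ (n - (m + 1))) x))

/-- Global (everywhere-defined) version of the European value functions. -/
noncomputable def stmt4E {d₁ d₂ d₃ : ℕ}
    (φ : ℕ → StateSpace d₁ d₂ d₃ → ℝ)
    (κ : ℕ → Kernel (StateSpace d₁ d₂ d₃) (StateSpace d₁ d₂ d₃))
    (n : ℕ) : ℕ → StateSpace d₁ d₂ d₃ → ℝ
  | 0 => φ n
  | (m + 1) => fun x => ∫ y, stmt4E φ κ n m y ∂((κ (n - (m + 1))) x)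

/-- Put case (`η = −1`): suppose the European values are strictly
positive, `e_k(x) > 0` for every `k < n` and `x ∈ C`.  With the latent coordinate map
`Ξ(x) := (s/α(x), y, z/α(x))` and `f*(k,ξ) := sup{α(x) : x ∈ S_k, Ξ(x) = ξ}` (with
`sup ∅ := 0`), the map `x ↦ (α(x), Ξ(x))` is a homeomorphism from `C` onto
`(0,∞) × Ξ(C)`, and for every `k < n` the stopping region satisfies
`S_k = { x ∈ C : α(x) ≤ f*(k, Ξ(x)) }`, the inequality being taken in `[0,∞]`. -/
theorem stmt_4
    {d₁ d₂ d₃ : ℕ}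
    (C : Set (StateSpace d₁ d₂ d₃)) (hCmeas : MeasurableSet C)
    (scale : ℝ → StateSpace d₁ d₂ d₃ → StateSpace d₁ d₂ d₃)
    (hscale : ∀ γ x, scale γ x = (γ • x.1, x.2.1, γ • x.2.2))
    (hC : ∀ γ > (0 : ℝ), ∀ x ∈ C, scale γ x ∈ C)
    (n : ℕ) (hn : 1 ≤ n) (t : ℕ → ℝ) (ht : ∀ i < n, t i < t (i + 1))
    (a : ℝ) (ha : 0 < a)
    (La : Set (StateSpace d₁ d₂ d₃ → ℝ))
    (hLa : La = {ψ | ContinuousOn ψ C ∧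
      ∃ c > 0, ∀ x ∈ C, |ψ x| ≤ c * (1 + ‖x‖ ^ a)})
    (α β : StateSpace d₁ d₂ d₃ → ℝ)
    (hαc : ContinuousOn α C) (hαpos : ∀ x ∈ C, 0 < α x)
    (hαhom : ∀ γ > (0 : ℝ), ∀ x ∈ C, α (scale γ x) = γ * α x)
    (hβc : ContinuousOn β C) (hβnn : ∀ x ∈ C, 0 ≤ β x)
    (hβhom : ∀ γ > (0 : ℝ), ∀ x ∈ C, β (scale γ x) = γ * β x)
    (K r η : ℝ) (hK : 0 < K) (hr : 0 ≤ r) (hη : η = -1)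
    (φ : ℕ → StateSpace d₁ d₂ d₃ → ℝ)
    (hφdef : ∀ k ≤ n, ∀ x ∈ C,
      φ k x = Real.exp (-(r * t k)) * max (η * (α x - β x - K)) 0)
    (hφLa : ∀ k ≤ n, φ k ∈ La)
    (κ : ℕ → Kernel (StateSpace d₁ d₂ d₃) (StateSpace d₁ d₂ d₃))
    (hκ : ∀ k, IsMarkovKernel (κ k))
    (hκC : ∀ k < n, ∀ x ∈ C, (κ k) x Cᶜ = 0)
    (hgc : ∀ k < n, ∀ ψ ∈ La,
      (∀ x ∈ C, Integrable ψ ((κ k) x)) ∧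
      (fun x => ∫ y, ψ y ∂((κ k) x)) ∈ La)
    (hκscale : ∀ k < n, ∀ γ > (0 : ℝ), ∀ x ∈ C,
      Measure.map (scale γ) ((κ k) x) = (κ k) (scale γ x))
    (v : ℕ → StateSpace d₁ d₂ d₃ → ℝ)
    (hvn : ∀ x ∈ C, v n x = φ n x)
    (hv : ∀ k < n, ∀ x ∈ C, v k x = max (φ k x) (∫ y, v (k + 1) y ∂((κ k) x)))
    (e : ℕ → StateSpace d₁ d₂ d₃ → ℝ)
    (hen : ∀ x ∈ C, e n x = φ n x)
    (he : ∀ k < n, ∀ x ∈ C, e k x = ∫ y, e (k + 1) y ∂((κ k) x))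
    (hepos : ∀ k < n, ∀ x ∈ C, 0 < e k x)
    (S : ℕ → Set (StateSpace d₁ d₂ d₃))
    (hS : ∀ k, S k = {x | x ∈ C ∧ v k x = φ k x})
    (Ξ : StateSpace d₁ d₂ d₃ → StateSpace d₁ d₂ d₃)
    (hΞ : ∀ x ∈ C, Ξ x = scale (α x)⁻¹ x)
    (fstar : ℕ → StateSpace d₁ d₂ d₃ → ℝ≥0∞)
    (hfstar : ∀ k < n, ∀ ξ, fstar k ξ =
      sSup ((fun x => ENNReal.ofReal (α x)) '' {x | x ∈ S k ∧ Ξ x = ξ})) :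
    (∃ H : ↥C ≃ₜ ↥(Set.Ioi (0 : ℝ) ×ˢ (Ξ '' C)),
      ∀ x : ↥C, (H x : ℝ × StateSpace d₁ d₂ d₃) = (α ↑x, Ξ ↑x)) ∧
    (∀ k < n, S k = {x | x ∈ C ∧ ENNReal.ofReal (α x) ≤ fstar k (Ξ x)}) := by
  subst hη
  -- basic facts about `scale`
  have sc_comp : ∀ (g₁ g₂ : ℝ) x, scale g₁ (scale g₂ x) = scale (g₁ * g₂) x := by
    intro g₁ g₂ x; simp [hscale, smul_smul]
  have sc_one : ∀ x, scale 1 x = x := by intro x; simp [hscale]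
  have sc_cont : ∀ γ : ℝ, Continuous (scale γ) := by
    intro γ
    have hfe : scale γ = fun x : StateSpace d₁ d₂ d₃ => (γ • x.1, x.2.1, γ • x.2.2) :=
      funext (hscale γ)
    rw [hfe]
    exact ((continuous_const : Continuous fun _ : StateSpace d₁ d₂ d₃ => γ).smul continuous_fst).prodMk
      ((continuous_fst.comp continuous_snd).prodMk
        ((continuous_const : Continuous fun _ : StateSpace d₁ d₂ d₃ => γ).smul (continuous_snd.comp continuous_snd)))
  -- basic facts about `Ξ`
  have hΞC : ∀ x ∈ C, Ξ x ∈ C := by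
    intro x hx; rw [hΞ x hx]; exact hC _ (inv_pos.2 (hαpos x hx)) x hx
  have hαΞ : ∀ x ∈ C, α (Ξ x) = 1 := by
    intro x hx
    rw [hΞ x hx, hαhom _ (inv_pos.2 (hαpos x hx)) x hx,
      inv_mul_cancel₀ (hαpos x hx).ne']
  have hleft : ∀ x ∈ C, scale (α x) (Ξ x) = x := by
    intro x hx
    rw [hΞ x hx, sc_comp, mul_inv_cancel₀ (hαpos x hx).ne', sc_one]
  -- Part 1: the homeomorphism
  have part1 : ∃ H : ↥C ≃ₜ ↥(Set.Ioi (0 : ℝ) ×ˢ (Ξ '' C)),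
      ∀ x : ↥C, (H x : ℝ × StateSpace d₁ d₂ d₃) = (α ↑x, Ξ ↑x) := by
    have hmemT : ∀ x : ↥C,
        ((α ↑x, Ξ ↑x) : ℝ × StateSpace d₁ d₂ d₃) ∈ Set.Ioi (0 : ℝ) ×ˢ (Ξ '' C) :=
      fun x => ⟨hαpos _ x.2, ⟨↑x, x.2, rfl⟩⟩
    have hinvmem : ∀ p : ↥(Set.Ioi (0 : ℝ) ×ˢ (Ξ '' C)),
        scale (p : ℝ × StateSpace d₁ d₂ d₃).1 (p : ℝ × StateSpace d₁ d₂ d₃).2 ∈ C := by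
      intro p
      obtain ⟨hγ, hξ⟩ := p.2
      obtain ⟨x, hx, hxe⟩ := hξ
      rw [← hxe]
      exact hC _ hγ _ (hΞC x hx)
    have hαcr : Continuous (fun x : ↥C => α ↑x) := hαc.restrict
    have hinvc : Continuous (fun x : ↥C => (α ↑x)⁻¹) :=
      hαcr.inv₀ fun x => (hαpos _ x.2).ne'
    have hΞcr : Continuous (fun x : ↥C => Ξ ↑x) := by
      have heq : (fun x : ↥C => Ξ ↑x) = fun x : ↥C =>
          (((α ↑x)⁻¹ • (↑x : StateSpace d₁ d₂ d₃).1,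
            (↑x : StateSpace d₁ d₂ d₃).2.1,
            (α ↑x)⁻¹ • (↑x : StateSpace d₁ d₂ d₃).2.2) : StateSpace d₁ d₂ d₃) := by
        funext x; rw [hΞ _ x.2, hscale]
      rw [heq]
      exact (hinvc.smul continuous_subtype_val.fst).prodMk
        ((continuous_subtype_val.snd.fst).prodMk
          (hinvc.smul continuous_subtype_val.snd.snd))
    refine ⟨{ toFun := fun x => ⟨(α ↑x, Ξ ↑x), hmemT x⟩
              invFun := fun p => ⟨scale (p : ℝ × StateSpace d₁ d₂ d₃).1
                (p : ℝ × StateSpace d₁ d₂ d₃).2, hinvmem p⟩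
              left_inv := fun x => Subtype.ext (hleft ↑x x.2)
              right_inv := ?_
              continuous_toFun := (hαcr.prodMk hΞcr).subtype_mk _
              continuous_invFun := ?_ }, fun x => rfl⟩
    · intro p
      obtain ⟨hγ, hξ⟩ := p.2
      obtain ⟨x, hx, hxe⟩ := hξ
      have hΞxC : Ξ x ∈ C := hΞC x hx
      have hpC : (p : ℝ × StateSpace d₁ d₂ d₃).2 ∈ C := hxe ▸ hΞxC
      have hγ' : (0 : ℝ) < (p : ℝ × StateSpace d₁ d₂ d₃).1 := hγ
      have hmem : scale (p : ℝ × StateSpace d₁ d₂ d₃).1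
          (p : ℝ × StateSpace d₁ d₂ d₃).2 ∈ C := hC _ hγ' _ hpC
      have hα1 : α (scale (p : ℝ × StateSpace d₁ d₂ d₃).1
          (p : ℝ × StateSpace d₁ d₂ d₃).2) = (p : ℝ × StateSpace d₁ d₂ d₃).1 := by
        rw [← hxe, hαhom _ hγ' _ hΞxC, hαΞ x hx, mul_one]
      apply Subtype.ext
      refine Prod.ext hα1 ?_
      show Ξ (scale (p : ℝ × StateSpace d₁ d₂ d₃).1
          (p : ℝ × StateSpace d₁ d₂ d₃).2) = (p : ℝ × StateSpace d₁ d₂ d₃).2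
      rw [hΞ _ hmem, hα1, sc_comp, inv_mul_cancel₀ (ne_of_gt hγ'), sc_one]
    · apply Continuous.subtype_mk
      have heq : (fun p : ↥(Set.Ioi (0 : ℝ) ×ˢ (Ξ '' C)) =>
          scale (p : ℝ × StateSpace d₁ d₂ d₃).1 (p : ℝ × StateSpace d₁ d₂ d₃).2) =
          fun p : ↥(Set.Ioi (0 : ℝ) ×ˢ (Ξ '' C)) =>
            (((p : ℝ × StateSpace d₁ d₂ d₃).1 • (p : ℝ × StateSpace d₁ d₂ d₃).2.1,
              (p : ℝ × StateSpace d₁ d₂ d₃).2.2.1,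
              (p : ℝ × StateSpace d₁ d₂ d₃).1 • (p : ℝ × StateSpace d₁ d₂ d₃).2.2.2) :
              StateSpace d₁ d₂ d₃) := by
        funext p; rw [hscale]
      rw [heq]
      have c1 : Continuous (fun p : ↥(Set.Ioi (0 : ℝ) ×ˢ (Ξ '' C)) =>
          (p : ℝ × StateSpace d₁ d₂ d₃).1) := continuous_subtype_val.fst
      have c2 : Continuous (fun p : ↥(Set.Ioi (0 : ℝ) ×ˢ (Ξ '' C)) =>
          (p : ℝ × StateSpace d₁ d₂ d₃).2) := continuous_subtype_val.snd
      exact (c1.smul c2.fst).prodMk ((c2.snd.fst).prodMk (c1.smul c2.snd.snd))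
  refine ⟨part1, ?_⟩
  -- Part 2: the stopping-region description
  -- a.e. membership in C
  have hκCae : ∀ k < n, ∀ x ∈ C, ∀ᵐ y ∂((κ k) x), y ∈ C := by
    intro k hk x hx
    rw [ae_iff]
    have : {y | ¬ y ∈ C} = Cᶜ := rfl
    rw [this]
    exact hκC k hk x hx
  -- La is closed under max
  have hLamax : ∀ ψ₁ ∈ La, ∀ ψ₂ ∈ La, (fun x => max (ψ₁ x) (ψ₂ x)) ∈ La := by
    intro ψ₁ h₁ ψ₂ h₂
    rw [hLa] at h₁ h₂ ⊢
    obtain ⟨hc₁, c₁, hc₁pos, hb₁⟩ := h₁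
    obtain ⟨hc₂, c₂, hc₂pos, hb₂⟩ := h₂
    refine ⟨continuous_max.comp_continuousOn (hc₁.prodMk hc₂), c₁ + c₂, by linarith, fun x hx => ?_⟩
    have h1 := hb₁ x hx; have h2 := hb₂ x hx
    have habs : |max (ψ₁ x) (ψ₂ x)| ≤ |ψ₁ x| + |ψ₂ x| := by
      rcases le_total (ψ₁ x) (ψ₂ x) with h | h
      · rw [max_eq_right h]; nlinarith [abs_nonneg (ψ₁ x)]
      · rw [max_eq_left h]; nlinarith [abs_nonneg (ψ₂ x)]
    nlinarith
  -- the global value functions agree with `v` on `C` and belong to `La`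
  have hWkey : ∀ m ≤ n, stmt4W φ κ n m ∈ La ∧
      ∀ x ∈ C, stmt4W φ κ n m x = v (n - m) x := by
    intro m
    induction m with
    | zero =>
      intro _
      constructor
      · simpa [stmt4W] using hφLa n le_rfl
      · intro x hx
        simp only [stmt4W, Nat.sub_zero]
        exact (hvn x hx).symm
    | succ m ih =>
      intro hm
      obtain ⟨ihLa, ihv⟩ := ih (by omega)
      have hk : n - (m + 1) < n := by omega
      have hk1 : n - (m + 1) + 1 = n - m := by omega
      obtain ⟨hint, hILa⟩ := hgc _ hk _ ihLa
      constructor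
      · exact hLamax _ (hφLa _ hk.le) _ hILa
      · intro x hx
        have hIeq : (∫ y, stmt4W φ κ n m y ∂((κ (n - (m + 1))) x)) =
            ∫ y, v (n - m) y ∂((κ (n - (m + 1))) x) := by
          refine integral_congr_ae ?_
          filter_upwards [hκCae _ hk x hx] with y hy using ihv y hy
        have hveq := hv _ hk x hx
        rw [hk1] at hveq
        simp only [stmt4W]
        rw [hIeq, ← hveq]
  have hvLa : ∀ j ≤ n, ∃ ψ ∈ La, ∀ x ∈ C, ψ x = v j x := by
    intro j hj
    obtain ⟨h1, h2⟩ := hWkey (n - j) (by omega)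
    have hjj : n - (n - j) = j := by omega
    rw [hjj] at h2
    exact ⟨_, h1, h2⟩
  -- global European value functions
  have hEkey : ∀ m ≤ n, stmt4E φ κ n m ∈ La ∧
      ∀ x ∈ C, stmt4E φ κ n m x = e (n - m) x := by
    intro m
    induction m with
    | zero =>
      intro _
      constructor
      · simpa [stmt4E] using hφLa n le_rfl
      · intro x hx
        simp only [stmt4E, Nat.sub_zero]
        exact (hen x hx).symm
    | succ m ih =>
      intro hm
      obtain ⟨ihLa, ihv⟩ := ih (by omega)
      have hk : n - (m + 1) < n := by omega
      have hk1 : n - (m + 1) + 1 = n - m := by omega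
      obtain ⟨hint, hILa⟩ := hgc _ hk _ ihLa
      constructor
      · exact hILa
      · intro x hx
        have hIeq : (∫ y, stmt4E φ κ n m y ∂((κ (n - (m + 1))) x)) =
            ∫ y, e (n - m) y ∂((κ (n - (m + 1))) x) := by
          refine integral_congr_ae ?_
          filter_upwards [hκCae _ hk x hx] with y hy using ihv y hy
        have hveq := he _ hk x hx
        rw [hk1] at hveq
        simp only [stmt4E]
        rw [hIeq, ← hveq]
  have heLa : ∀ j ≤ n, ∃ ψ ∈ La, ∀ x ∈ C, ψ x = e j x := by
    intro j hj
    obtain ⟨h1, h2⟩ := hEkey (n - j) (by omega)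
    have hjj : n - (n - j) = j := by omega
    rw [hjj] at h2
    exact ⟨_, h1, h2⟩
  -- integrability of v (k+1), e (k+1) w.r.t. κ k x
  have hvInt : ∀ k < n, ∀ x ∈ C, Integrable (v (k + 1)) ((κ k) x) := by
    intro k hk x hx
    obtain ⟨ψ, hψLa, hψv⟩ := hvLa (k + 1) (by omega)
    exact ((hgc k hk ψ hψLa).1 x hx).congr
      (by filter_upwards [hκCae k hk x hx] with y hy using hψv y hy)
  have heInt : ∀ k < n, ∀ x ∈ C, Integrable (e (k + 1)) ((κ k) x) := by
    intro k hk x hx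
    obtain ⟨ψ, hψLa, hψv⟩ := heLa (k + 1) (by omega)
    exact ((hgc k hk ψ hψLa).1 x hx).congr
      (by filter_upwards [hκCae k hk x hx] with y hy using hψv y hy)
  -- change of variables via the scaling property of the kernels
  have hmap : ∀ k < n, ∀ γ > (0 : ℝ), ∀ x ∈ C,
      ((∫ y, v (k + 1) y ∂((κ k) (scale γ x))) =
        ∫ y, v (k + 1) (scale γ y) ∂((κ k) x)) ∧
      Integrable (fun y => v (k + 1) (scale γ y)) ((κ k) x) := by
    intro k hk γ hγ x hx
    obtain ⟨ψ, hψLa, hψv⟩ := hvLa (k + 1) (by omega)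
    have hsx : scale γ x ∈ C := hC γ hγ x hx
    have hψint : Integrable ψ ((κ k) (scale γ x)) := (hgc k hk ψ hψLa).1 _ hsx
    have hmeas : AEMeasurable (scale γ) ((κ k) x) := (sc_cont γ).aemeasurable
    have hmapeq : Measure.map (scale γ) ((κ k) x) = (κ k) (scale γ x) :=
      hκscale k hk γ hγ x hx
    have hsm : AEStronglyMeasurable ψ (Measure.map (scale γ) ((κ k) x)) := by
      rw [hmapeq]; exact hψint.aestronglyMeasurable
    have hco : Integrable (fun y => ψ (scale γ y)) ((κ k) x) := by
      have := (integrable_map_measure hsm hmeas).mp (by rwa [hmapeq])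
      exact this
    have hae : ∀ᵐ y ∂((κ k) x), ψ (scale γ y) = v (k + 1) (scale γ y) := by
      filter_upwards [hκCae k hk x hx] with y hy using hψv _ (hC γ hγ y hy)
    constructor
    · calc (∫ y, v (k + 1) y ∂((κ k) (scale γ x)))
          = ∫ y, ψ y ∂((κ k) (scale γ x)) := integral_congr_ae
            (by filter_upwards [hκCae k hk _ hsx] with y hy using (hψv y hy).symm)
        _ = ∫ y, ψ y ∂(Measure.map (scale γ) ((κ k) x)) := by rw [hmapeq]
        _ = ∫ y, ψ (scale γ y) ∂((κ k) x) := integral_map hmeas hsm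
        _ = ∫ y, v (k + 1) (scale γ y) ∂((κ k) x) := integral_congr_ae hae
    · exact hco.congr hae
  -- monotonicity of the discount factors
  have hBmono : ∀ k < n,
      Real.exp (-(r * t (k + 1))) * K ≤ Real.exp (-(r * t k)) * K := by
    intro k hk
    have h1 : r * t k ≤ r * t (k + 1) := mul_le_mul_of_nonneg_left (ht k hk).le hr
    have h2 := Real.exp_le_exp.mpr (neg_le_neg h1)
    exact mul_le_mul_of_nonneg_right h2 hK.le
  -- the put payoff in explicit form
  have hφput : ∀ k ≤ n, ∀ x ∈ C,
      φ k x = Real.exp (-(r * t k)) * max (K - (α x - β x)) 0 := by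
    intro k hk x hx
    rw [hφdef k hk x hx, show (-1 : ℝ) * (α x - β x - K) = K - (α x - β x) by ring]
  -- key scalar inequality
  have hmaxkey : ∀ m γ : ℝ, 0 < γ → γ ≤ 1 →
      max (K - γ * m) 0 ≤ γ * max (K - m) 0 + (1 - γ) * K := by
    intro m γ h0 h1
    rcases le_total (K - m) 0 with h | h
    · rw [max_eq_right h]
      refine max_le (by nlinarith) (by nlinarith)
    · rw [max_eq_left h]
      refine max_le (by nlinarith) (by nlinarith)
  -- scaling bound for the payoff
  have hφscale : ∀ j ≤ n, ∀ x ∈ C, ∀ γ, 0 < γ → γ ≤ 1 →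
      φ j (scale γ x) ≤ γ * φ j x + (1 - γ) * (Real.exp (-(r * t j)) * K) := by
    intro j hj x hx γ h0 h1
    have hsx := hC γ h0 x hx
    rw [hφput j hj _ hsx, hφput j hj x hx, hαhom γ h0 x hx, hβhom γ h0 x hx,
      show K - (γ * α x - γ * β x) = K - γ * (α x - β x) by ring]
    have h := hmaxkey (α x - β x) γ h0 h1
    have hE := Real.exp_pos (-(r * t j))
    calc Real.exp (-(r * t j)) * max (K - γ * (α x - β x)) 0
        ≤ Real.exp (-(r * t j)) * (γ * max (K - (α x - β x)) 0 + (1 - γ) * K) :=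
          mul_le_mul_of_nonneg_left h hE.le
      _ = γ * (Real.exp (-(r * t j)) * max (K - (α x - β x)) 0) +
          (1 - γ) * (Real.exp (-(r * t j)) * K) := by ring
  -- integral scaling bound, given the pointwise bound at the next time step
  have hIb : ∀ k < n, ∀ x ∈ C, ∀ γ, 0 < γ → γ ≤ 1 →
      (∀ y ∈ C, v (k + 1) (scale γ y) ≤
        γ * v (k + 1) y + (1 - γ) * (Real.exp (-(r * t (k + 1))) * K)) →
      (∫ y, v (k + 1) y ∂((κ k) (scale γ x))) ≤
        γ * (∫ y, v (k + 1) y ∂((κ k) x)) +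
          (1 - γ) * (Real.exp (-(r * t (k + 1))) * K) := by
    intro k hk x hx γ h0 h1 hpt
    haveI := hκ k
    obtain ⟨hmapeq, hint⟩ := hmap k hk γ h0 x hx
    rw [hmapeq]
    have hint1 : Integrable (fun y => γ * v (k + 1) y) ((κ k) x) :=
      (hvInt k hk x hx).const_mul γ
    have hint2 : Integrable (fun y => γ * v (k + 1) y +
        (1 - γ) * (Real.exp (-(r * t (k + 1))) * K)) ((κ k) x) :=
      hint1.add (integrable_const _)
    calc (∫ y, v (k + 1) (scale γ y) ∂((κ k) x))
        ≤ ∫ y, (γ * v (k + 1) y +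
            (1 - γ) * (Real.exp (-(r * t (k + 1))) * K)) ∂((κ k) x) :=
          integral_mono_ae hint hint2
            (by filter_upwards [hκCae k hk x hx] with y hy using hpt y hy)
      _ = γ * (∫ y, v (k + 1) y ∂((κ k) x)) +
          (1 - γ) * (Real.exp (-(r * t (k + 1))) * K) := by
          rw [integral_add hint1 (integrable_const _), integral_const_mul,
            integral_const]
          simp [measure_univ]
  -- the scaling inequality for the value functions (★)
  have star : ∀ m, ∀ j, j + m = n → ∀ x ∈ C, ∀ γ, 0 < γ → γ ≤ 1 →
      v j (scale γ x) ≤ γ * v j x + (1 - γ) * (Real.exp (-(r * t j)) * K) := by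
    intro m
    induction m with
    | zero =>
      intro j hj x hx γ h0 h1
      have hjn : j = n := by omega
      subst hjn
      have hsx := hC γ h0 x hx
      rw [hvn _ hsx, hvn x hx]
      exact hφscale _ le_rfl x hx γ h0 h1
    | succ m ih =>
      intro j hj x hx γ h0 h1
      have hjn : j < n := by omega
      have hsx := hC γ h0 x hx
      have hpt : ∀ y ∈ C, v (j + 1) (scale γ y) ≤
          γ * v (j + 1) y + (1 - γ) * (Real.exp (-(r * t (j + 1))) * K) :=
        fun y hy => ih (j + 1) (by omega) y hy γ h0 h1
      have hI := hIb j hjn x hx γ h0 h1 hpt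
      have hB := hBmono j hjn
      rw [hv j hjn _ hsx, hv j hjn x hx]
      apply max_le
      · calc φ j (scale γ x)
            ≤ γ * φ j x + (1 - γ) * (Real.exp (-(r * t j)) * K) :=
              hφscale j hjn.le x hx γ h0 h1
          _ ≤ γ * max (φ j x) (∫ y, v (j + 1) y ∂((κ j) x)) +
              (1 - γ) * (Real.exp (-(r * t j)) * K) := by
              have := mul_le_mul_of_nonneg_left
                (le_max_left (φ j x) (∫ y, v (j + 1) y ∂((κ j) x))) h0.le
              linarith
      · calc (∫ y, v (j + 1) y ∂((κ j) (scale γ x)))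
            ≤ γ * (∫ y, v (j + 1) y ∂((κ j) x)) +
              (1 - γ) * (Real.exp (-(r * t (j + 1))) * K) := hI
          _ ≤ γ * max (φ j x) (∫ y, v (j + 1) y ∂((κ j) x)) +
              (1 - γ) * (Real.exp (-(r * t j)) * K) := by
              have h2 := mul_le_mul_of_nonneg_left
                (le_max_right (φ j x) (∫ y, v (j + 1) y ∂((κ j) x))) h0.le
              have h3 := mul_le_mul_of_nonneg_left hB (by linarith : (0:ℝ) ≤ 1 - γ)
              linarith
  -- European values are dominated by the value functions
  have hvge : ∀ m, ∀ j, j + m = n → ∀ x ∈ C, e j x ≤ v j x := by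
    intro m
    induction m with
    | zero =>
      intro j hj x hx
      have hjn : j = n := by omega
      subst hjn
      rw [hen x hx, hvn x hx]
    | succ m ih =>
      intro j hj x hx
      have hjn : j < n := by omega
      rw [he j hjn x hx, hv j hjn x hx]
      refine le_trans (integral_mono_ae (heInt j hjn x hx) (hvInt j hjn x hx) ?_)
        (le_max_right _ _)
      filter_upwards [hκCae j hjn x hx] with y hy using ih (j + 1) (by omega) y hy
  -- down-closedness of the stopping region along rays
  have hdown : ∀ k < n, ∀ x ∈ C, v k x = φ k x → ∀ γ, 0 < γ → γ ≤ 1 →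
      v k (scale γ x) = φ k (scale γ x) := by
    intro k hk x hx hstop γ h0 h1
    have hsx := hC γ h0 x hx
    have hφpos : 0 < φ k x :=
      lt_of_lt_of_le (hepos k hk x hx) (hstop ▸ hvge (n - k) k (by omega) x hx)
    have hKm : 0 < K - (α x - β x) := by
      rcases le_or_gt (K - (α x - β x)) 0 with h | h
      · rw [hφput k hk.le x hx, max_eq_right h, mul_zero] at hφpos
        exact absurd hφpos (lt_irrefl 0)
      · exact h
    have hφx : φ k x = Real.exp (-(r * t k)) * (K - (α x - β x)) := by
      rw [hφput k hk.le x hx, max_eq_left hKm.le]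
    have hφγ : φ k (scale γ x) =
        Real.exp (-(r * t k)) * (K - γ * (α x - β x)) := by
      rw [hφput k hk.le _ hsx, hαhom γ h0 x hx, hβhom γ h0 x hx,
        show K - (γ * α x - γ * β x) = K - γ * (α x - β x) by ring,
        max_eq_left (by nlinarith)]
    have hpt : ∀ y ∈ C, v (k + 1) (scale γ y) ≤
        γ * v (k + 1) y + (1 - γ) * (Real.exp (-(r * t (k + 1))) * K) :=
      fun y hy => star (n - (k + 1)) (k + 1) (by omega) y hy γ h0 h1
    have hI := hIb k hk x hx γ h0 h1 hpt
    have hIx : (∫ y, v (k + 1) y ∂((κ k) x)) ≤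
        Real.exp (-(r * t k)) * (K - (α x - β x)) := by
      have := hv k hk x hx
      have h2 : (∫ y, v (k + 1) y ∂((κ k) x)) ≤ v k x := by
        rw [this]; exact le_max_right _ _
      rwa [hstop, hφx] at h2
    have hB := hBmono k hk
    have hcont : (∫ y, v (k + 1) y ∂((κ k) (scale γ x))) ≤ φ k (scale γ x) := by
      rw [hφγ]
      have h4 := mul_le_mul_of_nonneg_left hIx h0.le
      have h5 := mul_le_mul_of_nonneg_left hB (by linarith : (0:ℝ) ≤ 1 - γ)
      nlinarith
    rw [hv k hk _ hsx, max_eq_left hcont]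
  -- conclusion
  intro k hk
  ext x
  simp only [hS k, Set.mem_setOf_eq]
  constructor
  · rintro ⟨hxC, hxv⟩
    refine ⟨hxC, ?_⟩
    rw [hfstar k hk]
    refine le_sSup ⟨x, ⟨?_, rfl⟩, rfl⟩
    rw [hS k]; exact ⟨hxC, hxv⟩
  · rintro ⟨hxC, hle⟩
    refine ⟨hxC, ?_⟩
    have hαx := hαpos x hxC
    -- each strictly scaled-down point is in the stopping region
    have hγstop : ∀ γ, 0 < γ → γ < 1 → v k (scale γ x) = φ k (scale γ x) := by
      intro γ h0 h1
      have hlt : ENNReal.ofReal (γ * α x) < fstar k (Ξ x) := by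
        refine lt_of_lt_of_le ?_ hle
        exact (ENNReal.ofReal_lt_ofReal_iff hαx).mpr (by nlinarith)
      rw [hfstar k hk] at hlt
      obtain ⟨b, hbmem, hbgt⟩ := lt_sSup_iff.mp hlt
      obtain ⟨w, ⟨hwS, hwΞ⟩, rfl⟩ := hbmem
      rw [hS k] at hwS
      obtain ⟨hwC, hwv⟩ := hwS
      have hαw := hαpos w hwC
      have hwgt : γ * α x < α w := by
        have := (ENNReal.ofReal_lt_ofReal_iff hαw).mp hbgt
        exact this
      set δ := γ * α x / α w with hδdef
      have hδ0 : 0 < δ := div_pos (mul_pos h0 hαx) hαw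
      have hδ1 : δ < 1 := (div_lt_one hαw).mpr hwgt
      have hkey : scale δ w = scale γ x := by
        have hΞeq : scale (α w)⁻¹ w = scale (α x)⁻¹ x := by
          rw [← hΞ w hwC, ← hΞ x hxC, hwΞ]
        have h1 : scale (γ * α x) (scale (α w)⁻¹ w) = scale δ w := by
          rw [sc_comp, show γ * α x * (α w)⁻¹ = δ from by
            rw [hδdef, div_eq_mul_inv]]
        have h2 : scale (γ * α x) (scale (α x)⁻¹ x) = scale γ x := by
          rw [sc_comp, show γ * α x * (α x)⁻¹ = γ from by field_simp]
        rw [← h1, hΞeq, h2]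

      have := hdown k hk w hwC hwv δ hδ0 hδ1.le
      rwa [hkey] at this
    -- take the limit γ → 1⁻
    obtain ⟨ψ, hψLa, hψv⟩ := hvLa k hk.le
    have hψc : ContinuousOn ψ C := (hLa ▸ hψLa).1
    have hφkc : ContinuousOn (φ k) C := (hLa ▸ hφLa k hk.le).1
    have hcurve : Continuous (fun γ : ℝ => scale γ x) := by
      have heq2 : (fun γ : ℝ => scale γ x) =
          fun γ : ℝ => ((γ • x.1, x.2.1, γ • x.2.2) : StateSpace d₁ d₂ d₃) :=
        funext fun γ => hscale γ x
      rw [heq2]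
      exact (continuous_id.smul continuous_const).prodMk
        (continuous_const.prodMk (continuous_id.smul continuous_const))
    have hmapsto : Set.MapsTo (fun γ : ℝ => scale γ x) (Set.Ioi 0) C :=
      fun γ hγ => hC γ hγ x hxC
    have hF : ContinuousOn (fun γ : ℝ => ψ (scale γ x)) (Set.Ioi 0) :=
      hψc.comp hcurve.continuousOn hmapsto
    have hG : ContinuousOn (fun γ : ℝ => φ k (scale γ x)) (Set.Ioi 0) :=
      hφkc.comp hcurve.continuousOn hmapsto
    haveI hne : (𝓝[Set.Ioo (0 : ℝ) 1] (1 : ℝ)).NeBot :=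
      right_nhdsWithin_Ioo_neBot zero_lt_one
    have hmono : 𝓝[Set.Ioo (0 : ℝ) 1] (1 : ℝ) ≤ 𝓝[Set.Ioi (0 : ℝ)] 1 :=
      nhdsWithin_mono _ Set.Ioo_subset_Ioi_self
    have ht1 : Filter.Tendsto (fun γ : ℝ => ψ (scale γ x))
        (𝓝[Set.Ioo (0 : ℝ) 1] 1) (𝓝 (ψ (scale 1 x))) :=
      (hF 1 (by norm_num)).mono_left hmono
    have ht2 : Filter.Tendsto (fun γ : ℝ => φ k (scale γ x))
        (𝓝[Set.Ioo (0 : ℝ) 1] 1) (𝓝 (φ k (scale 1 x))) :=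
      (hG 1 (by norm_num)).mono_left hmono
    have heqf : (fun γ : ℝ => ψ (scale γ x)) =ᶠ[𝓝[Set.Ioo (0 : ℝ) 1] 1]
        (fun γ : ℝ => φ k (scale γ x)) := by
      filter_upwards [self_mem_nhdsWithin] with γ hγ
      rw [hψv _ (hC γ hγ.1 x hxC), hγstop γ hγ.1 hγ.2]
    have hlim := tendsto_nhds_unique (ht1.congr' heqf) ht2
    rw [sc_one] at hlim
    rw [hψv x hxC] at hlim
    exact hlim
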